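/- Let s ≥ 1 be an integer and let k, n be positive integers. Then c_k^{(s)}(n) = Σ_{d : d | k and d^s | n} μ(k/d)·d^s, where μ is the Möbius function. -/

import Mathlib

open scoped BigOperators
open ArithmeticFunction
open scoped ArithmeticFunction.Moebius
open scoped ArithmeticFunction.zeta

/-- Generalized gcd `(a,b)_s`: the largest `d ^ s` (with `d` a positive integer)
dividing both `a` and `b`. -/
def ggcd (s a b : ℕ) : ℕ :=
  (Nat.findGreatest (fun d => d ^ s ∣ a ∧ d ^ s ∣ b) (max a b)) ^ s

/-- The Cohen–Ramanujan sum `c_k^{(s)}(n) = Σ_{h=1, (h,k^s)_s=1}^{k^s} e^{2πinh/k^s}`. -/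
noncomputable def CRS (s k n : ℕ) : ℂ :=
  ∑ h ∈ Finset.Icc 1 (k ^ s),
    if ggcd s h (k ^ s) = 1 then
      Complex.exp (2 * Real.pi * Complex.I * n * h / (k ^ s))
    else 0

/-- The core of `k`: its largest squarefree divisor. -/
def core (k : ℕ) : ℕ := ∏ p ∈ k.primeFactors, p

/-- `k* = k / k̄`. -/
def spart (k : ℕ) : ℕ := k / core k

/-- `ξ_d(k) = d` if `d ∣ k`, and `0` otherwise. -/
def xi (d k : ℕ) : ℕ := if d ∣ k then d else 0

/-- Klee's function `Φ_s(n) = n ∏_{p prime, p^s ∣ n} (1 - 1/p^s)`. -/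
noncomputable def Klee (s n : ℕ) : ℂ :=
  n * ∏ p ∈ n.primeFactors.filter (fun p => p ^ s ∣ n), (1 - 1 / (p : ℂ) ^ s)

/-- The Jordan totient function `J_s(n) = n^s ∏_{p ∣ n} (1 - 1/p^s)` (as a complex number). -/
noncomputable def Jordan (s n : ℕ) : ℂ :=
  (n : ℂ) ^ s * ∏ p ∈ n.primeFactors, (1 - 1 / (p : ℂ) ^ s)

lemma lcm_pow_dvd {s h : ℕ} (hs : s ≠ 0) (hh : 0 < h) {a b : ℕ}
    (ha : a ^ s ∣ h) (hb : b ^ s ∣ h) : (Nat.lcm a b) ^ s ∣ h := by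
  have ha0 : a ≠ 0 := by
    rintro rfl; rw [zero_pow hs] at ha; omega
  have hb0 : b ≠ 0 := by
    rintro rfl; rw [zero_pow hs] at hb; omega
  have hl0 : Nat.lcm a b ≠ 0 := Nat.lcm_ne_zero ha0 hb0
  rw [← Nat.factorization_le_iff_dvd (pow_ne_zero _ hl0) hh.ne']
  rw [Nat.factorization_pow, Nat.factorization_lcm ha0 hb0]
  intro p
  have h1 : s * a.factorization p ≤ h.factorization p := by
    have := (Nat.factorization_le_iff_dvd (pow_ne_zero _ ha0) hh.ne').2 ha p
    simpa [Nat.factorization_pow] using this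
  have h2 : s * b.factorization p ≤ h.factorization p := by
    have := (Nat.factorization_le_iff_dvd (pow_ne_zero _ hb0) hh.ne').2 hb p
    simpa [Nat.factorization_pow] using this
  have heq : (s • (a.factorization ⊔ b.factorization)) p
      = s * max (a.factorization p) (b.factorization p) := by
    simp [Finsupp.sup_apply]
  rw [heq]
  rcases le_total (a.factorization p) (b.factorization p) with hab | hab
  · rw [max_eq_right hab]; exact h2
  · rw [max_eq_left hab]; exact h1

lemma pow_dvd_iff_dvd_findGreatest {s h : ℕ} (hs : 1 ≤ s) (hh : 0 < h) (d : ℕ) :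
    d ^ s ∣ h ↔ d ∣ Nat.findGreatest (fun d => d ^ s ∣ h) h := by
  have hP1 : (1 : ℕ) ^ s ∣ h := by simp
  have hr1 : 1 ≤ Nat.findGreatest (fun d => d ^ s ∣ h) h :=
    Nat.le_findGreatest (P := fun d => d ^ s ∣ h) hh hP1
  have hrP : (Nat.findGreatest (fun d => d ^ s ∣ h) h) ^ s ∣ h :=
    Nat.findGreatest_spec (P := fun d => d ^ s ∣ h) (m := 1) hh hP1
  set r := Nat.findGreatest (fun d => d ^ s ∣ h) h with hrdef
  constructor
  · intro hd
    have hd0 : d ≠ 0 := by rintro rfl; rw [zero_pow (by omega)] at hd; omega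
    set l := Nat.lcm d r with hl
    have hlP : l ^ s ∣ h := lcm_pow_dvd (by omega) hh hd hrP
    have hl0 : l ≠ 0 := Nat.lcm_ne_zero hd0 (by omega)
    have hl_le : l ≤ h := le_trans (Nat.le_self_pow (by omega) l) (Nat.le_of_dvd hh hlP)
    have h1 : l ≤ r := Nat.le_findGreatest (P := fun d => d ^ s ∣ h) hl_le hlP
    have h2 : r ≤ l := Nat.le_of_dvd (by omega) (Nat.dvd_lcm_right d r)
    have : l = r := le_antisymm h1 h2
    exact this ▸ Nat.dvd_lcm_left d r
  · intro hd
    exact dvd_trans (pow_dvd_pow_of_dvd hd s) hrP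

lemma ggcd_pow_eq {s h k : ℕ} (hs : 1 ≤ s) (hh : 0 < h) (hk : 0 < k) :
    ggcd s h (k ^ s) = (Nat.gcd k (Nat.findGreatest (fun d => d ^ s ∣ h) h)) ^ s := by
  have hr1 : 1 ≤ Nat.findGreatest (fun d => d ^ s ∣ h) h :=
    Nat.le_findGreatest (P := fun d => d ^ s ∣ h) hh (by simp)
  set r := Nat.findGreatest (fun d => d ^ s ∣ h) h with hrdef
  set g := Nat.gcd k r with hg
  have hg0 : 0 < g := Nat.gcd_pos_of_pos_left r hk
  have hQ : ∀ d, (d ^ s ∣ h ∧ d ^ s ∣ k ^ s) ↔ d ∣ g := by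
    intro d
    rw [pow_dvd_iff_dvd_findGreatest hs hh, Nat.pow_dvd_pow_iff (by omega : s ≠ 0),
      ← hrdef, hg, Nat.dvd_gcd_iff, and_comm]
  have hbound : g ≤ max h (k ^ s) := by
    have h1 : g ≤ k := Nat.le_of_dvd hk (Nat.gcd_dvd_left k r)
    have h2 : g ≤ k ^ s := le_trans h1 (Nat.le_self_pow (by omega) k)
    exact le_trans h2 (le_max_right _ _)
  have hQg : g ^ s ∣ h ∧ g ^ s ∣ k ^ s := (hQ g).2 dvd_rfl
  have hF : Nat.findGreatest (fun d => d ^ s ∣ h ∧ d ^ s ∣ k ^ s) (max h (k ^ s)) = g := by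
    have h1 : g ≤ Nat.findGreatest (fun d => d ^ s ∣ h ∧ d ^ s ∣ k ^ s) (max h (k ^ s)) :=
      Nat.le_findGreatest (P := fun d => d ^ s ∣ h ∧ d ^ s ∣ k ^ s) hbound hQg
    have h2 : Nat.findGreatest (fun d => d ^ s ∣ h ∧ d ^ s ∣ k ^ s) (max h (k ^ s)) ∣ g :=
      (hQ _).1 (Nat.findGreatest_spec (P := fun d => d ^ s ∣ h ∧ d ^ s ∣ k ^ s)
        (m := g) hbound hQg)
    exact le_antisymm (Nat.le_of_dvd hg0 h2) h1
  unfold ggcd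
  rw [hF]

lemma indicator_eq {s h k : ℕ} (hs : 1 ≤ s) (hh : 0 < h) (hk : 0 < k) :
    (if ggcd s h (k ^ s) = 1 then (1 : ℂ) else 0) =
      ∑ d ∈ k.divisors.filter (fun d => d ^ s ∣ h), (μ d : ℂ) := by
  have hr1 : 1 ≤ Nat.findGreatest (fun d => d ^ s ∣ h) h :=
    Nat.le_findGreatest (P := fun d => d ^ s ∣ h) hh (by simp)
  set r := Nat.findGreatest (fun d => d ^ s ∣ h) h with hrdef
  set g := Nat.gcd k r with hg
  have hg0 : 0 < g := Nat.gcd_pos_of_pos_left r hk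
  have hset : k.divisors.filter (fun d => d ^ s ∣ h) = g.divisors := by
    ext d
    simp only [Finset.mem_filter, Nat.mem_divisors]
    rw [pow_dvd_iff_dvd_findGreatest hs hh, ← hrdef, hg, Nat.dvd_gcd_iff]
    constructor
    · rintro ⟨⟨h1, _⟩, h2⟩; exact ⟨⟨h1, h2⟩, hg0.ne'⟩
    · rintro ⟨⟨h1, h2⟩, _⟩; exact ⟨⟨h1, hk.ne'⟩, h2⟩
  rw [hset]
  have hmu : ∑ d ∈ g.divisors, μ d = if g = 1 then 1 else 0 := by
    have h0 : (μ * (ζ : ArithmeticFunction ℤ)) g = (1 : ArithmeticFunction ℤ) g := by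
      rw [ArithmeticFunction.moebius_mul_coe_zeta]
    rwa [ArithmeticFunction.coe_mul_zeta_apply, ArithmeticFunction.one_apply] at h0
  have hcond : ggcd s h (k ^ s) = 1 ↔ g = 1 := by
    rw [ggcd_pow_eq hs hh hk, ← hrdef, ← hg, pow_eq_one_iff, or_iff_left (by omega : ¬ s = 0)]
  rw [if_congr hcond rfl rfl]
  have hcast : ((∑ d ∈ g.divisors, μ d : ℤ) : ℂ) = ∑ d ∈ g.divisors, (μ d : ℂ) := by
    push_cast; ring
  rw [← hcast, hmu]
  split <;> simp

lemma sum_exp_Icc {M : ℕ} (hM : 0 < M) (n : ℕ) :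
    ∑ m ∈ Finset.Icc 1 M, Complex.exp (2 * Real.pi * Complex.I * n * m / M) =
      if M ∣ n then (M : ℂ) else 0 := by
  have hM0 : (M : ℂ) ≠ 0 := Nat.cast_ne_zero.2 hM.ne'
  set z := Complex.exp (2 * Real.pi * Complex.I * n / M) with hz
  have hterm : ∀ m : ℕ, Complex.exp (2 * Real.pi * Complex.I * n * m / M) = z ^ m := by
    intro m
    rw [hz, ← Complex.exp_nat_mul]
    congr 1
    ring
  have hzM : z ^ M = 1 := by
    rw [hz, ← Complex.exp_nat_mul]
    have heq : (M : ℂ) * (2 * Real.pi * Complex.I * n / M) = n * (2 * Real.pi * Complex.I) := by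
      field_simp
    rw [heq]
    simpa using Complex.exp_int_mul_two_pi_mul_I (n : ℤ)
  have h2pi : (2 * (Real.pi : ℂ) * Complex.I) ≠ 0 := by
    simp [Real.pi_ne_zero, Complex.I_ne_zero]
  have hz1 : z = 1 ↔ M ∣ n := by
    rw [hz, Complex.exp_eq_one_iff]
    constructor
    · rintro ⟨w, hw⟩
      rw [div_eq_iff hM0] at hw
      have hnz : (n : ℂ) = (w : ℂ) * M := by
        apply mul_left_cancel₀ h2pi
        linear_combination hw
      have hint : (n : ℤ) = w * M := by exact_mod_cast hnz
      have : (M : ℤ) ∣ (n : ℤ) := ⟨w, by linarith⟩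
      exact_mod_cast this
    · intro hdvd
      obtain ⟨c, hc⟩ := hdvd
      refine ⟨(c : ℤ), ?_⟩
      rw [div_eq_iff hM0]
      push_cast [hc]
      ring
  have hsum : ∑ m ∈ Finset.Icc 1 M, z ^ m = z * ∑ m ∈ Finset.range M, z ^ m := by
    rw [← Finset.Ico_add_one_right_eq_Icc, Finset.sum_Ico_eq_sum_range]
    have : M + 1 - 1 = M := rfl
    rw [this]
    rw [Finset.mul_sum]
    apply Finset.sum_congr rfl
    intro i _
    rw [add_comm, ← pow_succ']
  calc ∑ m ∈ Finset.Icc 1 M, Complex.exp (2 * Real.pi * Complex.I * n * m / M)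
      = ∑ m ∈ Finset.Icc 1 M, z ^ m := Finset.sum_congr rfl (fun m _ => hterm m)
    _ = if M ∣ n then (M : ℂ) else 0 := by
        rw [hsum]
        by_cases h1 : z = 1
        · rw [if_pos (hz1.1 h1)]
          simp [h1]
        · rw [if_neg (fun hd => h1 (hz1.2 hd))]
          rw [geom_sum_eq h1, hzM]
          simp


lemma CRSinner {s k n d : ℕ} (hs : 1 ≤ s) (hk : 0 < k) (hd : d ∣ k) :
    ∑ h ∈ Finset.Icc 1 (k ^ s),
        (if d ^ s ∣ h then Complex.exp (2 * Real.pi * Complex.I * n * h / (k ^ s)) else 0) =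
      if (k / d) ^ s ∣ n then ((k / d : ℕ) : ℂ) ^ s else 0 := by
  set K := k / d with hK
  have hdK : d * K = k := Nat.mul_div_cancel' hd
  have hd0 : 0 < d := Nat.pos_of_dvd_of_pos hd hk
  have hK0 : 0 < K := Nat.div_pos (Nat.le_of_dvd hk hd) hd0
  have hKs : 0 < K ^ s := pow_pos hK0 s
  have hds : 0 < d ^ s := pow_pos hd0 s
  have hkpow : k ^ s = d ^ s * K ^ s := by rw [← hdK, mul_pow]
  have hdC : ((d : ℂ)) ^ s ≠ 0 := pow_ne_zero _ (Nat.cast_ne_zero.2 hd0.ne')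
  have hKC : ((K : ℂ)) ^ s ≠ 0 := pow_ne_zero _ (Nat.cast_ne_zero.2 hK0.ne')
  rw [← Finset.sum_filter]
  have hbij : ∑ h ∈ (Finset.Icc 1 (k ^ s)).filter (fun h => d ^ s ∣ h),
        Complex.exp (2 * Real.pi * Complex.I * n * h / (k ^ s)) =
      ∑ m ∈ Finset.Icc 1 (K ^ s),
        Complex.exp (2 * Real.pi * Complex.I * n * m / (K ^ s)) := by
    apply Finset.sum_nbij' (fun h => h / d ^ s) (fun m => d ^ s * m)
    · intro h hmem
      simp only [Finset.mem_filter, Finset.mem_Icc] at hmem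
      obtain ⟨⟨h1, h2⟩, hdvd⟩ := hmem
      rw [Finset.mem_Icc]
      constructor
      · exact Nat.one_le_div_iff hds |>.2 (Nat.le_of_dvd (by omega) hdvd)
      · rw [Nat.div_le_iff_le_mul_add_pred hds]
        calc h ≤ k ^ s := h2
          _ = d ^ s * K ^ s := hkpow
          _ ≤ d ^ s * K ^ s + (d ^ s - 1) := Nat.le_add_right _ _
    · intro m hmem
      rw [Finset.mem_Icc] at hmem
      simp only [Finset.mem_filter, Finset.mem_Icc]
      refine ⟨⟨?_, ?_⟩, Dvd.intro m rfl⟩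
      · calc 1 ≤ m := hmem.1
          _ ≤ d ^ s * m := Nat.le_mul_of_pos_left m hds
      · rw [hkpow]
        exact Nat.mul_le_mul_left _ hmem.2
    · intro h hmem
      simp only [Finset.mem_filter] at hmem
      exact Nat.mul_div_cancel' hmem.2
    · intro m _
      exact Nat.mul_div_cancel_left m hds
    · intro h hmem
      simp only [Finset.mem_filter, Finset.mem_Icc] at hmem
      obtain ⟨⟨h1, h2⟩, hdvd⟩ := hmem
      obtain ⟨m, rfl⟩ := hdvd
      rw [Nat.mul_div_cancel_left m hds]
      congr 1
      have : ((d ^ s * m : ℕ) : ℂ) = (d : ℂ) ^ s * m := by push_cast; ring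
      rw [this]
      have hkC : ((k : ℕ) : ℂ) ^ s = (d : ℂ) ^ s * (K : ℂ) ^ s := by
        rw [← hdK]; push_cast; ring
      rw [hkC]
      field_simp
  rw [hbij]
  have := sum_exp_Icc (M := K ^ s) hKs n
  rw [Nat.cast_pow] at this
  exact this

/-- `c_k^{(s)}(n) = Σ_{d ∣ k, d^s ∣ n} μ(k/d)·d^s`. -/
theorem CRS_eq_sum_moebius (s : ℕ) (hs : 1 ≤ s) (k n : ℕ) (hk : 0 < k) (hn : 0 < n) :
    CRS s k n =
      ∑ d ∈ k.divisors.filter (fun d => d ^ s ∣ n), (μ (k / d) : ℂ) * (d : ℂ) ^ s := by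
  have step1 : CRS s k n =
      ∑ h ∈ Finset.Icc 1 (k ^ s), ∑ d ∈ k.divisors,
        (if d ^ s ∣ h then (μ d : ℂ) *
          Complex.exp (2 * Real.pi * Complex.I * n * h / (k ^ s)) else 0) := by
    unfold CRS
    apply Finset.sum_congr rfl
    intro h hmem
    rw [Finset.mem_Icc] at hmem
    have hh : 0 < h := hmem.1
    have hsplit : (if ggcd s h (k ^ s) = 1 then
          Complex.exp (2 * Real.pi * Complex.I * n * h / (k ^ s)) else 0)
        = (if ggcd s h (k ^ s) = 1 then (1 : ℂ) else 0) *
          Complex.exp (2 * Real.pi * Complex.I * n * h / (k ^ s)) := by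
      split <;> simp
    rw [hsplit, indicator_eq hs hh hk, Finset.sum_mul, Finset.sum_filter]
  rw [step1, Finset.sum_comm]
  have step2 : ∀ d ∈ k.divisors,
      (∑ h ∈ Finset.Icc 1 (k ^ s),
        (if d ^ s ∣ h then (μ d : ℂ) *
          Complex.exp (2 * Real.pi * Complex.I * n * h / (k ^ s)) else 0)) =
      (μ d : ℂ) * (if (k / d) ^ s ∣ n then ((k / d : ℕ) : ℂ) ^ s else 0) := by
    intro d hdmem
    rw [Nat.mem_divisors] at hdmem
    have : ∀ h : ℕ, (if d ^ s ∣ h then (μ d : ℂ) *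
          Complex.exp (2 * Real.pi * Complex.I * n * h / (k ^ s)) else 0)
        = (μ d : ℂ) * (if d ^ s ∣ h then
          Complex.exp (2 * Real.pi * Complex.I * n * h / (k ^ s)) else 0) := by
      intro h; split <;> simp
    rw [Finset.sum_congr rfl (fun h _ => this h), ← Finset.mul_sum,
      CRSinner hs hk hdmem.1]
  rw [Finset.sum_congr rfl step2]
  have step3 : ∀ d ∈ k.divisors,
      (μ d : ℂ) * (if (k / d) ^ s ∣ n then ((k / d : ℕ) : ℂ) ^ s else 0)
      = (fun e => if e ^ s ∣ n then (μ (k / e) : ℂ) * ((e : ℕ) : ℂ) ^ s else 0) (k / d) := by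
    intro d hdmem
    rw [Nat.mem_divisors] at hdmem
    simp only
    rw [Nat.div_div_self hdmem.1 hk.ne']
    split <;> simp
  rw [Finset.sum_congr rfl step3, Nat.sum_div_divisors k
    (fun e => if e ^ s ∣ n then (μ (k / e) : ℂ) * ((e : ℕ) : ℂ) ^ s else 0)]
  rw [← Finset.sum_filter]
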